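/- Let 𝔤 be the 4-dimensional real Lie algebra with basis e₁, e₂, e₃, e₄ and nonzero brackets [e₁,e₂] = e₃, [e₄,e₁] = (1/2)e₁, [e₄,e₂] = (1/2)e₂, [e₄,e₃] = e₃ (the extension 𝔥₃(D) of the Heisenberg algebra by the derivation D = diag(1/2, 1/2, 1); this is the Lie algebra D_{4,1/2}). Let α = e³ ∈ 𝔤*, let ⟨·,·⟩ be the inner product making e₁,…,e₄ orthonormal, and let J ∈ End(𝔤) be given by J(e₁) = e₂, J(e₂) = −e₁, J(e₃) = −e₄, J(e₄) = e₃. Then: (i) the Kirillov form B_α(x,y) = α([x,y]) is nondegenerate, so (𝔤,α) is a Frobenius Lie algebra; (ii) J∘J = −Id; (iii) ⟨Jx,Jy⟩ = ⟨x,y⟩ for all x,y; (iv) B_α(x,y) = ⟨Jx,y⟩ for all x,y; (v) N_J = 0. Hence 𝔤 is a Frobenius–Kähler Lie algebra with exact symplectic form ω = −dα = B_α. -/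

import Mathlib

/-- The Nijenhuis tensor of a linear endomorphism `F` of a real Lie algebra:
`N_F(x,y) = F²([x,y]) + [Fx,Fy] − F([x,Fy]) − F([Fx,y])`. -/
def nijenhuis {L : Type*} [LieRing L] [LieAlgebra ℝ L] (F : L →ₗ[ℝ] L) (x y : L) : L :=
  F (F ⁅x, y⁆) + ⁅F x, F y⁆ - F ⁅x, F y⁆ - F ⁅F x, y⁆

/-- The 4-dimensional Lie algebra `𝔥₃(D) = D_{4,1/2}` (basis `e₁,e₂,e₃,e₄`, nonzero
brackets `[e₁,e₂]=e₃`, `[e₄,e₁]=(1/2)e₁`, `[e₄,e₂]=(1/2)e₂`, `[e₄,e₃]=e₃`), with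
`α = e³`, the inner product `⟨·,·⟩` making `e₁,…,e₄` orthonormal, and `J(e₁)=e₂`,
`J(e₂)=−e₁`, `J(e₃)=−e₄`, `J(e₄)=e₃`, is a Frobenius–Kähler Lie algebra:
the Kirillov form `B_α` is nondegenerate, `J∘J=−Id`, `⟨Jx,Jy⟩=⟨x,y⟩`,
`B_α(x,y)=⟨Jx,y⟩`, and `N_J = 0`. -/
theorem D4_half_is_frobenius_kahler
    {L : Type*} [LieRing L] [LieAlgebra ℝ L]
    (e : Module.Basis (Fin 4) ℝ L)
    (h12 : ⁅e 0, e 1⁆ = e 2) (h13 : ⁅e 0, e 2⁆ = 0) (h23 : ⁅e 1, e 2⁆ = 0)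
    (h41 : ⁅e 3, e 0⁆ = (1/2 : ℝ) • e 0)
    (h42 : ⁅e 3, e 1⁆ = (1/2 : ℝ) • e 1)
    (h43 : ⁅e 3, e 2⁆ = e 2)
    (α : L →ₗ[ℝ] ℝ) (hα : ∀ i : Fin 4, α (e i) = if i = 2 then 1 else 0)
    (g : L →ₗ[ℝ] L →ₗ[ℝ] ℝ)
    (hg : ∀ i j : Fin 4, g (e i) (e j) = if i = j then 1 else 0)
    (J : L →ₗ[ℝ] L)
    (hJ0 : J (e 0) = e 1) (hJ1 : J (e 1) = -(e 0))
    (hJ2 : J (e 2) = -(e 3)) (hJ3 : J (e 3) = e 2) :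
    -- (i) the Kirillov form B_α is nondegenerate, so (L, α) is Frobenius
    (∀ x : L, (∀ y : L, α ⁅x, y⁆ = 0) → x = 0) ∧
    -- (ii)
    (∀ v : L, J (J v) = -v) ∧
    -- (iii)
    (∀ x y : L, g (J x) (J y) = g x y) ∧
    -- (iv) B_α(x,y) = ⟨Jx, y⟩
    (∀ x y : L, α ⁅x, y⁆ = g (J x) y) ∧
    -- (v)
    (∀ x y : L, nijenhuis J x y = 0) := by
    -- derived bracket relations
  have h21 : ⁅e 1, e 0⁆ = -(e 2) := by rw [← lie_skew, h12]
  have h31 : ⁅e 2, e 0⁆ = (0 : L) := by rw [← lie_skew, h13]; simp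
  have h32 : ⁅e 2, e 1⁆ = (0 : L) := by rw [← lie_skew, h23]; simp
  have h14 : ⁅e 0, e 3⁆ = -((1/2 : ℝ) • e 0) := by rw [← lie_skew, h41]
  have h24 : ⁅e 1, e 3⁆ = -((1/2 : ℝ) • e 1) := by rw [← lie_skew, h42]
  have h34 : ⁅e 2, e 3⁆ = -(e 2) := by rw [← lie_skew, h43]
  -- the Kirillov bilinear form
  let B : L →ₗ[ℝ] L →ₗ[ℝ] ℝ := LinearMap.mk₂ ℝ (fun x y => α ⁅x, y⁆)
    (fun x x' y => by simp [add_lie]) (fun c x y => by simp [smul_lie])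
    (fun x y y' => by simp [lie_add]) (fun c x y => by simp [lie_smul])
  -- (ii)
  have hJJ : J ∘ₗ J = -LinearMap.id := by
    apply e.ext; intro i
    fin_cases i <;> simp [hJ0, hJ1, hJ2, hJ3]
  have part2 : ∀ v : L, J (J v) = -v := by
    intro v
    have := LinearMap.congr_fun hJJ v
    simpa using this
  -- (iv)
  have hB : B = g ∘ₗ J := by
    apply e.ext; intro i; apply e.ext; intro j
    fin_cases i <;> fin_cases j <;>
      simp [B, h12, h13, h23, h41, h42, h43, h21, h31, h32, h14, h24, h34,
        hJ0, hJ1, hJ2, hJ3, hg, hα]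
  have part4 : ∀ x y : L, α ⁅x, y⁆ = g (J x) y := by
    intro x y
    have := LinearMap.congr_fun (LinearMap.congr_fun hB x) y
    simpa [B] using this
  -- (iii)
  have part3 : ∀ x y : L, g (J x) (J y) = g x y := by
    have h : ((g ∘ₗ J).compl₂ J) = g := by
      apply e.ext; intro i; apply e.ext; intro j
      fin_cases i <;> fin_cases j <;> simp [hJ0, hJ1, hJ2, hJ3, hg]
    intro x y
    have := LinearMap.congr_fun (LinearMap.congr_fun h x) y
    simpa using this
  -- (v)
  have part5 : ∀ x y : L, nijenhuis J x y = 0 := by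
    let N : L →ₗ[ℝ] L →ₗ[ℝ] L := LinearMap.mk₂ ℝ (nijenhuis J)
      (fun x x' y => by simp only [nijenhuis, add_lie, lie_add, map_add]; abel)
      (fun c x y => by
        simp only [nijenhuis, smul_lie, lie_smul, map_smul, smul_add, smul_sub])
      (fun x y y' => by simp only [nijenhuis, add_lie, lie_add, map_add]; abel)
      (fun c x y => by
        simp only [nijenhuis, smul_lie, lie_smul, map_smul, smul_add, smul_sub])
    have hN : N = 0 := by
      apply e.ext; intro i; apply e.ext; intro j
      fin_cases i <;> fin_cases j <;>
        simp [N, nijenhuis, h12, h13, h23, h41, h42, h43, h21, h31, h32, h14, h24, h34,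
          hJ0, hJ1, hJ2, hJ3, smul_smul]
    intro x y
    have := LinearMap.congr_fun (LinearMap.congr_fun hN x) y
    simpa [N] using this
  -- coordinates via g
  have hcoord : ∀ (v : L) (j : Fin 4), g v (e j) = e.repr v j := by
    intro v j
    conv_lhs => rw [← e.sum_repr v]
    simp [hg, mul_ite, Finset.sum_ite_eq', -Module.Basis.sum_repr]
  -- (i)
  refine ⟨?_, part2, part3, part4, part5⟩
  intro x hx
  have hJx : J x = 0 := by
    have hr : e.repr (J x) = 0 := by
      ext j
      have := hx (e j)
      rw [part4] at this
      simpa [hcoord] using this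
    simpa using e.repr.map_eq_zero_iff.mp hr
  have := part2 x
  rw [hJx] at this
  simp at this
  exact this
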